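/- With a_β(x,y;δ) as the large-deviation rate function of the Mallows measure, its second derivative in δ equals β·(2 + e^{-βδ}/(1-e^{-βδ}) + e^{-β(x-δ)}/(1-e^{-β(x-δ)}) + e^{-β(y-δ)}/(1-e^{-β(y-δ)}) + e^{-β(1-x-y+δ)}/(1-e^{-β(1-x-y+δ)})), which is strictly positive; hence a_β(x,y;·) is strictly convex on (max{x+y-1,0}, min{x,y}). -/

import Mathlib

/-- The real dilogarithm `Li₂(x) = ∑_{n ≥ 1} xⁿ/n²`. -/
noncomputable def Li2 (x : ℝ) : ℝ := ∑' n : ℕ, x ^ (n + 1) / ((n : ℝ) + 1) ^ 2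

/-- The large-deviation rate function `a_β(x,y;δ)` of the Mallows height function. -/
noncomputable def rateFn (β x y δ : ℝ) : ℝ :=
  (1 / β) * (β ^ 2 * (x - δ) * (y - δ) - Real.pi ^ 2 / 6
    + Li2 (Real.exp (-β * δ)) + Li2 (Real.exp (-β * (x - δ)))
    + Li2 (Real.exp (-β * (y - δ))) + Li2 (Real.exp (-β * (1 - x - y + δ)))
    + Li2 (Real.exp (-β)) - Li2 (Real.exp (-β * x)) - Li2 (Real.exp (-β * y))
    - Li2 (Real.exp (-β * (1 - x))) - Li2 (Real.exp (-β * (1 - y))))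

lemma li2_hasDerivAt {z : ℝ} (h0 : 0 < z) (h1 : z < 1) :
    HasDerivAt Li2 (-Real.log (1 - z) / z) z := by
  set r : ℝ := (1 + z) / 2 with hr
  have hzr : z < r := by rw [hr]; linarith
  have hr0 : 0 < r := by rw [hr]; linarith
  have hr1 : r < 1 := by rw [hr]; linarith
  have hsum : Summable (fun n : ℕ => r ^ n) :=
    summable_geometric_of_lt_one hr0.le hr1
  have key : HasDerivAt (fun w : ℝ => ∑' n : ℕ, w ^ (n + 1) / ((n : ℝ) + 1) ^ 2)
      (∑' n : ℕ, z ^ n / ((n : ℝ) + 1)) z := by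
    apply hasDerivAt_tsum_of_isPreconnected hsum Metric.isOpen_ball
        (convex_ball (0 : ℝ) r).isPreconnected
        (g := fun (n : ℕ) (w : ℝ) => w ^ (n + 1) / ((n : ℝ) + 1) ^ 2)
        (g' := fun (n : ℕ) (w : ℝ) => w ^ n / ((n : ℝ) + 1))
        (y₀ := 0)
    · intro n w _
      have hne : ((n : ℝ) + 1) ≠ 0 := ne_of_gt (by positivity)
      have := (hasDerivAt_pow (n + 1) w).div_const (((n : ℝ) + 1) ^ 2)
      convert this using 1
      · rfl
      push_cast
      field_simp
    · intro n w hw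
      have hw' : |w| < r := by simpa [Metric.mem_ball, Real.dist_eq] using hw
      have h1n : (1 : ℝ) ≤ (n : ℝ) + 1 := by have := Nat.cast_nonneg (α := ℝ) n; linarith
      rw [Real.norm_eq_abs, abs_div, abs_pow]
      calc |w| ^ n / |((n : ℝ) + 1)| ≤ |w| ^ n := by
            apply div_le_self (by positivity)
            rw [abs_of_pos (by positivity)]; exact h1n
        _ ≤ r ^ n := pow_le_pow_left₀ (abs_nonneg _) hw'.le n
    · exact Metric.mem_ball_self hr0
    · apply summable_of_ne_finset_zero (s := ∅)
      intro n _
      simp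
    · simpa [Metric.mem_ball, Real.dist_eq, abs_of_pos h0] using hzr
  have htsum : (∑' n : ℕ, z ^ n / ((n : ℝ) + 1)) = -Real.log (1 - z) / z := by
    have hz : |z| < 1 := by rw [abs_of_pos h0]; exact h1
    have hs := (Real.hasSum_pow_div_log_of_abs_lt_one hz).mul_right z⁻¹
    have hzne : z ≠ 0 := ne_of_gt h0
    have : HasSum (fun n : ℕ => z ^ n / ((n : ℝ) + 1)) (-Real.log (1 - z) * z⁻¹) := by
      convert hs using 2 with n
      · rfl
      push_cast
      rw [pow_succ]
      field_simp
    rw [this.tsum_eq, div_eq_mul_inv]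
  rw [← htsum]
  exact key

lemma hasDerivAt_li2_comp {β : ℝ} (hβ : 0 < β) {f : ℝ → ℝ} {f' t : ℝ}
    (hf : HasDerivAt f f' t) (h : 0 < f t) :
    HasDerivAt (fun s => Li2 (Real.exp (-β * f s)))
      (β * f' * Real.log (1 - Real.exp (-β * f t))) t := by
  have hz0 : 0 < Real.exp (-β * f t) := Real.exp_pos _
  have hz1 : Real.exp (-β * f t) < 1 := by
    rw [Real.exp_lt_one_iff]
    nlinarith
  have hinner : HasDerivAt (fun s => Real.exp (-β * f s))
      (Real.exp (-β * f t) * (-β * f')) t :=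
    (Real.hasDerivAt_exp _).comp t (hf.const_mul (-β))
  have := (li2_hasDerivAt hz0 hz1).comp t hinner
  convert this using 1
  · rfl
  · rfl
  · rfl
  field_simp

lemma hasDerivAt_log_comp {β : ℝ} (hβ : 0 < β) {f : ℝ → ℝ} {f' t : ℝ}
    (hf : HasDerivAt f f' t) (h : 0 < f t) :
    HasDerivAt (fun s => Real.log (1 - Real.exp (-β * f s)))
      (β * f' * Real.exp (-β * f t) / (1 - Real.exp (-β * f t))) t := by
  have hz1 : Real.exp (-β * f t) < 1 := by
    rw [Real.exp_lt_one_iff]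
    nlinarith
  have hne : 1 - Real.exp (-β * f t) ≠ 0 := by linarith
  have hinner : HasDerivAt (fun s => 1 - Real.exp (-β * f s))
      (0 - Real.exp (-β * f t) * (-β * f')) t :=
    (hasDerivAt_const t 1).sub ((Real.hasDerivAt_exp _).comp t (hf.const_mul (-β)))
  have := hinner.log hne
  convert this using 1
  field_simp
  ring

/-- First derivative of the rate function. -/
noncomputable def D1 (β x y δ : ℝ) : ℝ :=
  β * (2 * δ - x - y) + Real.log (1 - Real.exp (-β * δ))
    - Real.log (1 - Real.exp (-β * (x - δ))) - Real.log (1 - Real.exp (-β * (y - δ)))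
    + Real.log (1 - Real.exp (-β * (1 - x - y + δ)))

lemma rate_hasDerivAt (β x y : ℝ) (hβ : 0 < β) {δ : ℝ}
    (h1 : 0 < δ) (h2 : δ < x) (h3 : δ < y) (h4 : x + y - 1 < δ) :
    HasDerivAt (fun t => rateFn β x y t) (D1 β x y δ) δ := by
  have hβne : β ≠ 0 := ne_of_gt hβ
  have hA := hasDerivAt_li2_comp hβ (hasDerivAt_id' (x := δ)) h1
  have hB := hasDerivAt_li2_comp hβ ((hasDerivAt_const δ x).sub (hasDerivAt_id' (x := δ)))
      (by linarith : (0:ℝ) < x - δ)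
  have hC := hasDerivAt_li2_comp hβ ((hasDerivAt_const δ y).sub (hasDerivAt_id' (x := δ)))
      (by linarith : (0:ℝ) < y - δ)
  have hD := hasDerivAt_li2_comp hβ ((hasDerivAt_const δ (1 - x - y)).add (hasDerivAt_id' (x := δ)))
      (by linarith : (0:ℝ) < 1 - x - y + δ)
  have hP : HasDerivAt (fun t : ℝ => β ^ 2 * (x - t) * (y - t))
      (β ^ 2 * ((0 - 1) * (y - δ) + (x - δ) * (0 - 1))) δ := by
    have := ((((hasDerivAt_const δ x).sub (hasDerivAt_id' (x := δ))).mul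
      ((hasDerivAt_const δ y).sub (hasDerivAt_id' (x := δ)))).const_mul (β ^ 2))
    convert this using 1
    · rfl
    · rfl
    funext t; simp only [Pi.sub_apply, Pi.mul_apply]; ring
    rfl
  simp only [rateFn]
  have hall := ((((((((((hP.sub (hasDerivAt_const δ (Real.pi ^ 2 / 6))).add hA).add hB).add
    hC).add hD).add (hasDerivAt_const δ (Li2 (Real.exp (-β))))).sub
    (hasDerivAt_const δ (Li2 (Real.exp (-β * x))))).sub
    (hasDerivAt_const δ (Li2 (Real.exp (-β * y))))).sub
    (hasDerivAt_const δ (Li2 (Real.exp (-β * (1 - x)))))).sub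
    (hasDerivAt_const δ (Li2 (Real.exp (-β * (1 - y)))))).const_mul (1 / β)
  convert hall using 1
  · rfl
  · rfl
  · rfl
  simp only [D1]
  simp only [Pi.sub_apply, Pi.add_apply]
  field_simp
  ring

lemma D1_hasDerivAt (β x y : ℝ) (hβ : 0 < β) {δ : ℝ}
    (h1 : 0 < δ) (h2 : δ < x) (h3 : δ < y) (h4 : x + y - 1 < δ) :
    HasDerivAt (fun t => D1 β x y t)
      (β * (2 + Real.exp (-β * δ) / (1 - Real.exp (-β * δ))
        + Real.exp (-β * (x - δ)) / (1 - Real.exp (-β * (x - δ)))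
        + Real.exp (-β * (y - δ)) / (1 - Real.exp (-β * (y - δ)))
        + Real.exp (-β * (1 - x - y + δ)) / (1 - Real.exp (-β * (1 - x - y + δ))))) δ := by
  have hA := hasDerivAt_log_comp hβ (hasDerivAt_id' (x := δ)) h1
  have hB := hasDerivAt_log_comp hβ ((hasDerivAt_const δ x).sub (hasDerivAt_id' (x := δ)))
      (by linarith : (0:ℝ) < x - δ)
  have hC := hasDerivAt_log_comp hβ ((hasDerivAt_const δ y).sub (hasDerivAt_id' (x := δ)))
      (by linarith : (0:ℝ) < y - δ)
  have hD := hasDerivAt_log_comp hβ ((hasDerivAt_const δ (1 - x - y)).add (hasDerivAt_id' (x := δ)))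
      (by linarith : (0:ℝ) < 1 - x - y + δ)
  have hP : HasDerivAt (fun t : ℝ => β * (2 * t - x - y)) (β * 2) δ := by
    have := (((hasDerivAt_id' (x := δ)).const_mul 2).sub (hasDerivAt_const δ (x + y))).const_mul β
    convert this using 1
    · rfl
    · rfl
    · funext t; simp only [Pi.sub_apply]; ring
    · ring
  have hall := ((((hP.add hA).sub hB).sub hC).add hD)
  simp only [D1]
  convert hall using 1
  · rfl
  · rfl
  · rfl
  simp only [Pi.sub_apply, Pi.add_apply]
  ring

theorem rateFn_second_deriv_and_convex (β x y : ℝ) (hβ : 0 < β)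
    (hx : x ∈ Set.Ioo (0:ℝ) 1) (hy : y ∈ Set.Ioo (0:ℝ) 1) :
    (∀ δ ∈ Set.Ioo (max (x + y - 1) 0) (min x y),
      deriv (deriv (fun t => rateFn β x y t)) δ
        = β * (2 + Real.exp (-β * δ) / (1 - Real.exp (-β * δ))
          + Real.exp (-β * (x - δ)) / (1 - Real.exp (-β * (x - δ)))
          + Real.exp (-β * (y - δ)) / (1 - Real.exp (-β * (y - δ)))
          + Real.exp (-β * (1 - x - y + δ)) / (1 - Real.exp (-β * (1 - x - y + δ))))) ∧
    (∀ δ ∈ Set.Ioo (max (x + y - 1) 0) (min x y),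
      0 < β * (2 + Real.exp (-β * δ) / (1 - Real.exp (-β * δ))
          + Real.exp (-β * (x - δ)) / (1 - Real.exp (-β * (x - δ)))
          + Real.exp (-β * (y - δ)) / (1 - Real.exp (-β * (y - δ)))
          + Real.exp (-β * (1 - x - y + δ)) / (1 - Real.exp (-β * (1 - x - y + δ))))) ∧
    StrictConvexOn ℝ (Set.Ioo (max (x + y - 1) 0) (min x y))
      (fun t => rateFn β x y t) := by
  have hcond : ∀ δ ∈ Set.Ioo (max (x + y - 1) 0) (min x y),
      0 < δ ∧ δ < x ∧ δ < y ∧ x + y - 1 < δ := by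
    intro δ hδ
    obtain ⟨hl, hr⟩ := hδ
    rw [max_lt_iff] at hl
    rw [lt_min_iff] at hr
    exact ⟨hl.2, hr.1, hr.2, hl.1⟩
  have hderiv2 : ∀ δ ∈ Set.Ioo (max (x + y - 1) 0) (min x y),
      deriv (deriv (fun t => rateFn β x y t)) δ
        = β * (2 + Real.exp (-β * δ) / (1 - Real.exp (-β * δ))
          + Real.exp (-β * (x - δ)) / (1 - Real.exp (-β * (x - δ)))
          + Real.exp (-β * (y - δ)) / (1 - Real.exp (-β * (y - δ)))
          + Real.exp (-β * (1 - x - y + δ)) / (1 - Real.exp (-β * (1 - x - y + δ)))) := by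
    intro δ hδ
    obtain ⟨h1, h2, h3, h4⟩ := hcond δ hδ
    have hev : deriv (fun t => rateFn β x y t) =ᶠ[nhds δ] (fun t => D1 β x y t) := by
      filter_upwards [isOpen_Ioo.mem_nhds hδ] with t ht
      obtain ⟨g1, g2, g3, g4⟩ := hcond t ht
      exact (rate_hasDerivAt β x y hβ g1 g2 g3 g4).deriv
    rw [hev.deriv_eq]
    exact (D1_hasDerivAt β x y hβ h1 h2 h3 h4).deriv
  have hpos : ∀ δ ∈ Set.Ioo (max (x + y - 1) 0) (min x y),
      0 < β * (2 + Real.exp (-β * δ) / (1 - Real.exp (-β * δ))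
          + Real.exp (-β * (x - δ)) / (1 - Real.exp (-β * (x - δ)))
          + Real.exp (-β * (y - δ)) / (1 - Real.exp (-β * (y - δ)))
          + Real.exp (-β * (1 - x - y + δ)) / (1 - Real.exp (-β * (1 - x - y + δ)))) := by
    intro δ hδ
    obtain ⟨h1, h2, h3, h4⟩ := hcond δ hδ
    have key : ∀ s : ℝ, 0 < s → 0 < Real.exp (-β * s) / (1 - Real.exp (-β * s)) := by
      intro s hs
      apply div_pos (Real.exp_pos _)
      have : Real.exp (-β * s) < 1 := by
        rw [Real.exp_lt_one_iff]; nlinarith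
      linarith
    have k1 := key δ h1
    have k2 := key (x - δ) (by linarith)
    have k3 := key (y - δ) (by linarith)
    have k4 := key (1 - x - y + δ) (by linarith)
    apply mul_pos hβ
    linarith
  refine ⟨hderiv2, hpos, ?_⟩
  apply strictConvexOn_of_deriv2_pos (convex_Ioo _ _)
  · intro t ht
    obtain ⟨g1, g2, g3, g4⟩ := hcond t ht
    exact (rate_hasDerivAt β x y hβ g1 g2 g3 g4).continuousAt.continuousWithinAt
  · intro δ hδ
    rw [interior_Ioo] at hδ
    have : deriv^[2] (fun t => rateFn β x y t) δ
        = deriv (deriv (fun t => rateFn β x y t)) δ := by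
      simp [Function.iterate_succ, Function.iterate_zero]
    rw [this, hderiv2 δ hδ]
    exact hpos δ hδ
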